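/- Let R be a commutative Bezout ring and let S(R) be the set of elements a ∈ R such that R/aR has stable range 1. If a, b ∈ S(R) then ab ∈ S(R). -/

import Mathlib

def HasStableRange1 (R : Type*) [CommRing R] : Prop :=
  ∀ a b : R, Ideal.span {a, b} = ⊤ → ∃ t : R, IsUnit (a + b * t)

theorem stmt10 {R : Type*} [CommRing R] [IsBezout R] (a b : R)
    (ha : HasStableRange1 (R ⧸ Ideal.span ({a} : Set R)))
    (hb : HasStableRange1 (R ⧸ Ideal.span ({b} : Set R))) :
    HasStableRange1 (R ⧸ Ideal.span ({a * b} : Set R)) := by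
  intro xq yq hxy
  obtain ⟨x, rfl⟩ := Ideal.Quotient.mk_surjective xq
  obtain ⟨y, rfl⟩ := Ideal.Quotient.mk_surjective yq
  -- extract the relation c*x + d*y = 1 + a*b*r
  have h1 : (1 : R ⧸ Ideal.span ({a * b} : Set R)) ∈
      Ideal.span {Ideal.Quotient.mk _ x, Ideal.Quotient.mk _ y} := by
    rw [hxy]; trivial
  rw [Ideal.mem_span_pair] at h1
  obtain ⟨cq, dq, hcd⟩ := h1
  obtain ⟨c, rfl⟩ := Ideal.Quotient.mk_surjective cq
  obtain ⟨d, rfl⟩ := Ideal.Quotient.mk_surjective dq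
  rw [← map_mul, ← map_mul, ← map_add, ← map_one (Ideal.Quotient.mk _),
    Ideal.Quotient.eq, Ideal.mem_span_singleton] at hcd
  obtain ⟨r, hr⟩ := hcd
  have hr : c * x + d * y - 1 = a * b * r := hr
  -- step 1 : stable range mod a
  have hspan_a : Ideal.span ({Ideal.Quotient.mk (Ideal.span ({a} : Set R)) x,
      Ideal.Quotient.mk _ y} : Set (R ⧸ Ideal.span ({a} : Set R))) = ⊤ := by
    rw [Ideal.eq_top_iff_one, Ideal.mem_span_pair]
    refine ⟨Ideal.Quotient.mk _ c, Ideal.Quotient.mk _ d, ?_⟩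
    rw [← map_mul, ← map_mul, ← map_add, ← map_one (Ideal.Quotient.mk _),
      Ideal.Quotient.eq, Ideal.mem_span_singleton]
    exact ⟨b * r, by linear_combination hr⟩
  obtain ⟨tq, ht⟩ := ha _ _ hspan_a
  obtain ⟨t, rfl⟩ := Ideal.Quotient.mk_surjective tq
  rw [← map_mul, ← map_add] at ht
  obtain ⟨uq, hu⟩ := ht.exists_right_inv
  obtain ⟨u, rfl⟩ := Ideal.Quotient.mk_surjective uq
  rw [← map_mul, ← map_one (Ideal.Quotient.mk _), Ideal.Quotient.eq,
    Ideal.mem_span_singleton] at hu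
  obtain ⟨v, hv⟩ := hu
  have hv : (x + y * t) * u - 1 = a * v := hv
  -- step 2 : stable range mod b, with pair (x + y*t, y*a)
  have hspan_b : Ideal.span ({Ideal.Quotient.mk (Ideal.span ({b} : Set R)) (x + y * t),
      Ideal.Quotient.mk _ (y * a)} : Set (R ⧸ Ideal.span ({b} : Set R))) = ⊤ := by
    rw [Ideal.eq_top_iff_one, Ideal.mem_span_pair]
    refine ⟨Ideal.Quotient.mk _ (u + c - c * u * (x + y * t)),
      Ideal.Quotient.mk _ (-((d - c * t) * v)), ?_⟩
    rw [← map_mul, ← map_mul, ← map_add, ← map_one (Ideal.Quotient.mk _),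
      Ideal.Quotient.eq, Ideal.mem_span_singleton]
    exact ⟨-(a * a * r * v), by linear_combination (1 - c * (x + y * t)) * hv - a * v * hr⟩
  obtain ⟨sq, hs⟩ := hb _ _ hspan_b
  obtain ⟨s, rfl⟩ := Ideal.Quotient.mk_surjective sq
  rw [← map_mul, ← map_add] at hs
  obtain ⟨wq, hw⟩ := hs.exists_right_inv
  obtain ⟨w, rfl⟩ := Ideal.Quotient.mk_surjective wq
  rw [← map_mul, ← map_one (Ideal.Quotient.mk _), Ideal.Quotient.eq,
    Ideal.mem_span_singleton] at hw
  obtain ⟨w', hw⟩ := hw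
  have hw : (x + y * t + y * a * s) * w - 1 = b * w' := hw
  -- the element z = x + y*(t + a*s)
  set z := x + y * t + y * a * s with hz
  have hzu : z * u = 1 + a * (v + y * s * u) := by rw [hz]; linear_combination hv
  have hzw : z * w = 1 + b * w' := by rw [hz]; linear_combination hw
  refine ⟨Ideal.Quotient.mk _ (t + a * s), ?_⟩
  rw [← map_mul, ← map_add]
  apply IsUnit.of_mul_eq_one (Ideal.Quotient.mk _ (u + w - z * u * w))
  rw [← map_mul, ← map_one (Ideal.Quotient.mk _), Ideal.Quotient.eq,
    Ideal.mem_span_singleton]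
  refine ⟨-((v + y * s * u) * w'), ?_⟩
  have : (x + y * (t + a * s)) = z := by rw [hz]; ring
  rw [this]
  linear_combination (1 - z * w) * hzu + (-(a * (v + y * s * u))) * hzw
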